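/- arXiv:2006.14184 — 4 statements merged into one kernel-verified Lean document; each statement's English description precedes it below -/
import Mathlib

section
/- Let x : [0,∞) → ℝ be a nondecreasing, nonnegative function, and define the payment p(θ) = θ·x(θ) − ∫₀^θ x(z) dz. Then for every true type θ and every report θ', the utility from truthful reporting θ·x(θ) − p(θ) is at least the utility from misreporting θ·x(θ') − p(θ'). (Strategy-proofness of the Myerson payment rule.) -/
theorem myerson_sp
    (x : ℝ → ℝ) (hmono : MonotoneOn x (Set.Ici 0))
    (hnn : ∀ θ ∈ Set.Ici (0:ℝ), 0 ≤ x θ)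
    (hint : ∀ θ ∈ Set.Ici (0:ℝ), IntervalIntegrable x MeasureTheory.volume 0 θ)
    (p : ℝ → ℝ)
    (hp : ∀ θ, p θ = θ * x θ - ∫ z in (0:ℝ)..θ, x z) :
    ∀ θ ∈ Set.Ici (0:ℝ), ∀ θ' ∈ Set.Ici (0:ℝ),
      θ * x θ' - p θ' ≤ θ * x θ - p θ := by
  intro θ hθ θ' hθ'
  rw [hp, hp]
  have hθ0 : (0:ℝ) ≤ θ := hθ
  have hθ'0 : (0:ℝ) ≤ θ' := hθ'
  -- integrability on [θ', θ] (unordered)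
  have hI : IntervalIntegrable x MeasureTheory.volume θ' θ := by
    rcases le_total θ' θ with h | h
    · exact (hint θ hθ).mono_set (by
        rw [Set.uIcc_of_le h, Set.uIcc_of_le hθ0]
        exact Set.Icc_subset_Icc hθ'0 le_rfl)
    · exact ((hint θ' hθ').mono_set (by
        rw [Set.uIcc_comm, Set.uIcc_of_le h, Set.uIcc_of_le hθ'0]
        exact Set.Icc_subset_Icc hθ0 le_rfl))
  have hsplit : (∫ z in (0:ℝ)..θ, x z) - (∫ z in (0:ℝ)..θ', x z)
      = ∫ z in θ'..θ, x z := by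
    rw [intervalIntegral.integral_interval_sub_left (hint θ hθ) (hint θ' hθ')]
  have key : (θ - θ') * x θ' ≤ ∫ z in θ'..θ, x z := by
    rcases le_total θ' θ with h | h
    · have : ∫ z in θ'..θ, x θ' ≤ ∫ z in θ'..θ, x z := by
        apply intervalIntegral.integral_mono_on h (intervalIntegrable_const) hI
        intro z hz
        exact hmono hθ' (le_trans hθ'0 hz.1) hz.1
      simpa [mul_comm] using this
    · have h1 : ∫ z in θ..θ', x z ≤ ∫ z in θ..θ', x θ' := by
        apply intervalIntegral.integral_mono_on h hI.symm intervalIntegrable_const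
        intro z hz
        exact hmono (le_trans hθ0 hz.1) hθ' hz.2
      rw [intervalIntegral.integral_symm θ θ']
      simp only [intervalIntegral.integral_const, smul_eq_mul] at h1 ⊢
      nlinarith [h1]
  have : (θ - θ') * x θ' ≤ (∫ z in (0:ℝ)..θ, x z) - (∫ z in (0:ℝ)..θ', x z) := by
    rw [hsplit]; exact key
  nlinarith [this]
end

section
/- Suppose x and p satisfy strategy-proofness (for all θ, θ': θ·x(θ) − p(θ) ≥ θ·x(θ') − p(θ')), x is differentiable, p is differentiable, and p(0) = 0, x(0)·0 = 0. Then for all θ ≥ 0, p(θ) = θ·x(θ) − ∫₀^θ x(z) dz. (Uniqueness of the payment rule.) -/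
theorem payment_uniqueness
    (x p : ℝ → ℝ)
    (hsp : ∀ θ ∈ Set.Ici (0:ℝ), ∀ θ' ∈ Set.Ici (0:ℝ),
      θ * x θ' - p θ' ≤ θ * x θ - p θ)
    (hx : Differentiable ℝ x) (hpdiff : Differentiable ℝ p)
    (hp0 : p 0 = 0) (hx0 : x 0 * 0 = 0) :
    ∀ θ ∈ Set.Ici (0:ℝ), p θ = θ * x θ - ∫ z in (0:ℝ)..θ, x z := by
  intro θ hθ
  rcases eq_or_lt_of_le (show (0:ℝ) ≤ θ from hθ) with h0 | hpos
  · simp [← h0, hp0]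
  · have hxc : Continuous x := hx.continuous
    set f : ℝ → ℝ := fun t => p t - t * x t + ∫ z in (0:ℝ)..t, x z with hf
    have hfd : ∀ t, HasDerivAt f (deriv p t - (1 * x t + t * deriv x t) + x t) t := by
      intro t
      have h1 := (hpdiff t).hasDerivAt
      have h2 := (hasDerivAt_id t).mul (hx t).hasDerivAt
      have h3 : HasDerivAt (fun u => ∫ z in (0:ℝ)..u, x z) (x t) t :=
        intervalIntegral.integral_hasDerivAt_right (hxc.intervalIntegrable _ _)
          (hxc.stronglyMeasurableAtFilter _ _) hxc.continuousAt
      exact (h1.sub h2).add h3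
    have foc : ∀ c : ℝ, 0 < c → deriv p c = c * deriv x c := by
      intro c hc
      have hmem : Set.Ici (0:ℝ) ∈ nhds c := Ici_mem_nhds hc
      have hmax : IsLocalMax (fun t => c * x t - p t) c :=
        Filter.eventually_of_mem hmem (fun t ht => hsp c hc.le t ht)
      have hF : HasDerivAt (fun t => c * x t - p t) (c * deriv x c - deriv p c) c :=
        (((hx c).hasDerivAt).const_mul c).sub (hpdiff c).hasDerivAt
      have h0 : c * deriv x c - deriv p c = 0 := hmax.hasDerivAt_eq_zero hF
      linarith
    have hcont : ContinuousOn f (Set.Icc 0 θ) :=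
      fun t _ => ((hfd t).differentiableAt).continuousAt.continuousWithinAt
    have hdiff : DifferentiableOn ℝ f (Set.Ioo 0 θ) :=
      fun t _ => ((hfd t).differentiableAt).differentiableWithinAt
    obtain ⟨c, hc, hderiv⟩ := exists_deriv_eq_slope f hpos hcont hdiff
    have hdc : deriv f c = 0 := by
      rw [(hfd c).deriv]
      have := foc c hc.1
      ring_nf
      linarith
    have hf0 : f 0 = 0 := by simp [hf, hp0]
    rw [hdc, hf0] at hderiv
    have hθne : θ - 0 ≠ 0 := by linarith
    have hfθ : f θ = 0 := by
      field_simp at hderiv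
      linarith [hderiv]
    have : p θ - θ * x θ + ∫ z in (0:ℝ)..θ, x z = 0 := hfθ
    linarith
end

section
/- Let x be nondecreasing on [0, H] and p(θ) = θ·x(θ) − ∫₀^θ x(z) dz. If θ is a random variable on [0, H] with density f and CDF F, then the expected payment E[p(θ)] equals E[φ(θ)·x(θ)], where φ(θ) = θ − (1 − F(θ))/f(θ). -/
open Set MeasureTheory Filter Topology intervalIntegral

theorem myerson_revenue_equivalence
    (H : ℝ) (hH : 0 < H)
    (x f F p : ℝ → ℝ)
    (hmono : MonotoneOn x (Set.Icc 0 H))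
    (hf : Continuous f)
    (hfpos : ∀ θ ∈ Set.Icc 0 H, 0 < f θ)
    (hF : ∀ θ, F θ = ∫ z in (0:ℝ)..θ, f z)
    (hFH : F H = 1)
    (hp : ∀ θ, p θ = θ * x θ - ∫ z in (0:ℝ)..θ, x z)
    (hxint : IntervalIntegrable x MeasureTheory.volume 0 H) :
    (∫ θ in (0:ℝ)..H, p θ * f θ) =
      ∫ θ in (0:ℝ)..H, (θ - (1 - F θ) / f θ) * x θ * f θ := by
  -- clamp x to get a globally monotone function y agreeing with x on [0, H]
  set y : ℝ → ℝ := fun z => x (min (max z 0) H) with hy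
  have hclamp : ∀ z : ℝ, min (max z 0) H ∈ Icc 0 H := fun z =>
    ⟨le_min (le_max_right _ _) hH.le, min_le_right _ _⟩
  have hymono : Monotone y := fun a b hab =>
    hmono (hclamp a) (hclamp b) (min_le_min (max_le_max hab le_rfl) le_rfl)
  have hyx : ∀ z ∈ Icc 0 H, y z = x z := by
    intro z hz
    simp only [hy, max_eq_left hz.1, min_eq_left hz.2]
  have hyint : IntervalIntegrable y volume 0 H := hymono.intervalIntegrable
  -- the primitive G of y
  set G : ℝ → ℝ := fun θ => ∫ z in (0:ℝ)..θ, y z with hG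
  have hGx : ∀ θ ∈ Icc 0 H, (∫ z in (0:ℝ)..θ, x z) = G θ := by
    intro θ hθ
    refine integral_congr fun z hz => ?_
    rw [uIcc_of_le hθ.1] at hz
    exact (hyx z ⟨hz.1, hz.2.trans hθ.2⟩).symm
  -- F is differentiable with derivative f
  have hFfun : F = fun u => ∫ z in (0:ℝ)..u, f z := funext hF
  have hFd : ∀ θ : ℝ, HasDerivAt F (f θ) θ := by
    intro θ
    rw [hFfun]
    exact intervalIntegral.integral_hasDerivAt_right (hf.intervalIntegrable _ _)
      (hf.stronglyMeasurableAtFilter _ _) hf.continuousAt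
  have hFcont : Continuous F := by
    rw [continuous_iff_continuousAt]; exact fun θ => (hFd θ).continuousAt
  -- the right limit r of y
  set r : ℝ → ℝ := fun θ => sInf (y '' Ioi θ) with hr
  have htends : ∀ θ : ℝ, Tendsto y (𝓝[>] θ) (𝓝 (r θ)) := fun θ =>
    hymono.tendsto_nhdsGT θ
  have hbddB : ∀ θ : ℝ, BddBelow (y '' Ioi θ) := fun θ =>
    ⟨y θ, by rintro v ⟨z, hz, rfl⟩; exact hymono hz.le⟩
  have hrmono : Monotone r := by
    intro a b hab
    refine csInf_le_csInf (hbddB a) ⟨y (b + 1), mem_image_of_mem _ (mem_Ioi.2 (lt_add_one b))⟩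
      (image_mono (Ioi_subset_Ioi hab))
  -- G has right derivative r θ
  have hGd : ∀ θ : ℝ, HasDerivWithinAt G (r θ) (Ioi θ) θ := by
    intro θ
    have hmeas : StronglyMeasurableAtFilter y (𝓝[>] θ) volume :=
      ⟨univ, univ_mem, hymono.measurable.aestronglyMeasurable.restrict⟩
    have h1 : HasDerivWithinAt G (r θ) (Ici θ) θ :=
      intervalIntegral.integral_hasDerivWithinAt_of_tendsto_ae_right
        (hymono.intervalIntegrable) (s := Ici θ) (t := Ioi θ) hmeas
        ((htends θ).mono_left inf_le_left)
    exact h1.mono Ioi_subset_Ici_self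
  -- continuity of G on [0, H]
  have hGcontIcc : ContinuousOn G (Icc 0 H) := by
    have hio : IntegrableOn y (uIcc 0 H) volume :=
      (hymono.monotoneOn _).integrableOn_isCompact isCompact_uIcc
    have := continuousOn_primitive_interval hio
    rwa [uIcc_of_le hH.le] at this
  -- integrabilities
  have hrF : IntervalIntegrable (fun θ => r θ * F θ) volume 0 H :=
    hrmono.intervalIntegrable.mul_continuousOn hFcont.continuousOn
  have hGf : IntervalIntegrable (fun θ => G θ * f θ) volume 0 H := by
    apply ContinuousOn.intervalIntegrable
    rw [uIcc_of_le hH.le]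
    exact hGcontIcc.mul hf.continuousOn
  have hFy : IntervalIntegrable (fun θ => F θ * y θ) volume 0 H :=
    hymono.intervalIntegrable.continuousOn_mul hFcont.continuousOn
  have hA : IntervalIntegrable (fun θ => y θ * (θ * f θ)) volume 0 H :=
    hymono.intervalIntegrable.mul_continuousOn
      ((continuous_id.mul hf).continuousOn)
  -- integration by parts via FTC-2 with right derivatives
  have hparts : (∫ θ in (0:ℝ)..H, (r θ * F θ + G θ * f θ)) = G H := by
    have h := intervalIntegral.integral_eq_sub_of_hasDeriv_right_of_le hH.le
      (f := fun θ => G θ * F θ) (f' := fun θ => r θ * F θ + G θ * f θ)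
      (hGcontIcc.mul hFcont.continuousOn)
      (fun θ _ => (hGd θ).mul (hFd θ).hasDerivWithinAt)
      (hrF.add hGf)
    have hF0 : F 0 = 0 := by rw [hF 0, integral_same]
    have hG0 : G 0 = 0 := integral_same
    rw [h]; simp [hFH, hF0, hG0]
  -- replace r by y a.e.
  have hrFy : (∫ θ in (0:ℝ)..H, r θ * F θ) = ∫ θ in (0:ℝ)..H, F θ * y θ := by
    set s := {θ : ℝ | ¬ContinuousWithinAt y (Ioi θ) θ} with hs
    have hcount : s.Countable := by
      have := (hymono.monotoneOn univ).countable_not_continuousWithinAt_Ioi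
      simpa [hs] using this
    have hs0 : volume s = 0 := hcount.measure_zero _
    have hae : ∀ᵐ θ : ℝ, θ ∉ s := by
      rw [ae_iff]; simpa [not_not] using hs0
    refine integral_congr_ae ?_
    filter_upwards [hae] with θ hθ _
    have hcw : ContinuousWithinAt y (Ioi θ) θ := not_not.1 hθ
    have : r θ = y θ := tendsto_nhds_unique (htends θ) hcw
    rw [this, mul_comm]
  have hGfval : (∫ θ in (0:ℝ)..H, G θ * f θ) = G H - ∫ θ in (0:ℝ)..H, F θ * y θ := by
    rw [← hrFy]
    have := intervalIntegral.integral_add hrF hGf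
    rw [this] at hparts
    linarith
  -- rewrite the LHS
  have hLHS : (∫ θ in (0:ℝ)..H, p θ * f θ)
      = (∫ θ in (0:ℝ)..H, y θ * (θ * f θ)) - ∫ θ in (0:ℝ)..H, G θ * f θ := by
    rw [← intervalIntegral.integral_sub hA hGf]
    refine integral_congr fun θ hθ => ?_
    rw [uIcc_of_le hH.le] at hθ
    rw [hp θ, hGx θ hθ, hyx θ hθ]
    ring
  -- rewrite the RHS
  have hRHS : (∫ θ in (0:ℝ)..H, (θ - (1 - F θ) / f θ) * x θ * f θ)
      = (∫ θ in (0:ℝ)..H, y θ * (θ * f θ)) -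
        ((∫ θ in (0:ℝ)..H, y θ) - ∫ θ in (0:ℝ)..H, F θ * y θ) := by
    rw [← intervalIntegral.integral_sub hymono.intervalIntegrable hFy,
      ← intervalIntegral.integral_sub hA (hymono.intervalIntegrable.sub hFy)]
    refine integral_congr fun θ hθ => ?_
    rw [uIcc_of_le hH.le] at hθ
    rw [hyx θ hθ]
    have hfne : f θ ≠ 0 := (hfpos θ hθ).ne'
    field_simp
  have hintY : (∫ θ in (0:ℝ)..H, y θ) = G H := rfl
  rw [hLHS, hRHS, hGfval, hintY]
end

section
/- Let M be a mechanism on the exploit model that is strategy-proof and individually rational, where for each offender i the disclosure time t_i assigned by M does not depend on i's own report. Define M' by setting each offender's disclosure time to 0 while keeping all defenders' disclosure times and all payments unchanged. Then M' is strategy-proof and individually rational, and M' has the same revenue as M on every type profile. -/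
/-- A profile of reported valuation densities is valid if every report is a
nonnegative function that is interval-integrable on `[0,1]`. -/
def ValidProfile {ι : Type*} (R : ι → ℝ → ℝ) : Prop :=
  ∀ i, (∀ z, 0 ≤ R i z) ∧ IntervalIntegrable (R i) MeasureTheory.volume 0 1

lemma split_int (w : ℝ → ℝ) (hw : IntervalIntegrable w MeasureTheory.volume 0 1)
    (a b : ℝ) (ha : 0 ≤ a) (hab : a ≤ b) (hb : b ≤ 1) :
    (∫ z in (0:ℝ)..b, w z) = (∫ z in (0:ℝ)..a, w z) + ∫ z in a..b, w z := by
  have h1 : IntervalIntegrable w MeasureTheory.volume 0 a :=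
    hw.mono_set (Set.uIcc_subset_uIcc Set.left_mem_uIcc
      (Set.mem_uIcc.2 (Or.inl ⟨ha, hab.trans hb⟩)))
  have h2 : IntervalIntegrable w MeasureTheory.volume a b :=
    hw.mono_set (Set.uIcc_subset_uIcc
      (Set.mem_uIcc.2 (Or.inl ⟨ha, hab.trans hb⟩))
      (Set.mem_uIcc.2 (Or.inl ⟨ha.trans hab, hb⟩)))
  exact (intervalIntegral.integral_add_adjacent_intervals h1 h2).symm

theorem proposition_one
    {ι : Type*} [Fintype ι] [DecidableEq ι]
    (O D : Set ι) (hOD : ∀ i, i ∈ O ∨ i ∈ D)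
    -- mechanism M: disclosure times for offenders, fixing time, payments
    (t : (ι → ℝ → ℝ) → ι → ℝ)
    (tend : (ι → ℝ → ℝ) → ℝ)
    (pay : (ι → ℝ → ℝ) → ι → ℝ)
    (htrange : ∀ R i, i ∈ O → t R i ∈ Set.Icc 0 (tend R))
    (htendrange : ∀ R, tend R ∈ Set.Icc (0:ℝ) 1)
    -- utility under M of agent i with true density w when the report profile is R
    (u : (ι → ℝ → ℝ) → ι → (ℝ → ℝ) → ℝ)
    (hu_off : ∀ R i w, i ∈ O → u R i w = (∫ z in (t R i)..(tend R), w z) - pay R i)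
    (hu_def : ∀ R i w, i ∈ D → u R i w = (∫ z in (tend R)..(1:ℝ), w z) - pay R i)
    -- M is strategy-proof and individually rational on valid profiles
    (hSP : ∀ R, ValidProfile R → ∀ i w', (∀ z, 0 ≤ w' z) →
      IntervalIntegrable w' MeasureTheory.volume 0 1 →
      u (Function.update R i w') i (R i) ≤ u R i (R i))
    (hIR : ∀ R, ValidProfile R → ∀ i, 0 ≤ u R i (R i))
    -- straight-forwardness: an offender's disclosure time is independent of her own report
    (hSF : ∀ R i, i ∈ O → ∀ w', t (Function.update R i w') i = t R i)
    -- mechanism M': all offenders are disclosed the exploit at time 0;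
    -- fixing time and payments are unchanged
    (t' : (ι → ℝ → ℝ) → ι → ℝ) (ht' : ∀ R i, t' R i = 0)
    (tend' : (ι → ℝ → ℝ) → ℝ) (htend' : ∀ R, tend' R = tend R)
    (pay' : (ι → ℝ → ℝ) → ι → ℝ) (hpay' : ∀ R i, pay' R i = pay R i)
    -- utility under M'
    (u' : (ι → ℝ → ℝ) → ι → (ℝ → ℝ) → ℝ)
    (hu'_off : ∀ R i w, i ∈ O → u' R i w = (∫ z in (t' R i)..(tend' R), w z) - pay' R i)
    (hu'_def : ∀ R i w, i ∈ D → u' R i w = (∫ z in (tend' R)..(1:ℝ), w z) - pay' R i) :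
    -- M' is strategy-proof
    (∀ R, ValidProfile R → ∀ i w', (∀ z, 0 ≤ w' z) →
      IntervalIntegrable w' MeasureTheory.volume 0 1 →
      u' (Function.update R i w') i (R i) ≤ u' R i (R i)) ∧
    -- M' is individually rational
    (∀ R, ValidProfile R → ∀ i, 0 ≤ u' R i (R i)) ∧
    -- M' has the same revenue as M on every profile
    (∀ R, ∑ i, pay' R i = ∑ i, pay R i) := by
  
  have hup : ∀ (R : ι → ℝ → ℝ), ValidProfile R → ∀ i (w' : ℝ → ℝ), (∀ z, 0 ≤ w' z) →
      IntervalIntegrable w' MeasureTheory.volume 0 1 → ValidProfile (Function.update R i w') := by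
    intro R hR i w' hw' hint j
    rcases eq_or_ne j i with h | h
    · subst h; simpa using ⟨hw', hint⟩
    · simpa [Function.update_of_ne h] using hR j
  refine ⟨?_, ?_, ?_⟩
  · intro R hR i w' hw' hw'int
    rcases hOD i with hi | hi
    · set Ru := Function.update R i w' with hRu
      have hS := hSP R hR i w' hw' hw'int
      rw [hu_off R i (R i) hi, hu_off Ru i (R i) hi] at hS
      rw [hu'_off R i (R i) hi, hu'_off Ru i (R i) hi, ht', ht', htend', htend', hpay', hpay']
      have hti : t Ru i = t R i := hSF R i hi w'
      have hri := hR i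
      have h1 := split_int (R i) hri.2 (t Ru i) (tend Ru) (htrange Ru i hi).1
        (htrange Ru i hi).2 (htendrange Ru).2
      have h2 := split_int (R i) hri.2 (t R i) (tend R) (htrange R i hi).1
        (htrange R i hi).2 (htendrange R).2
      rw [hti] at h1 hS
      rw [h1, h2]
      linarith
    · rw [hu'_def R i _ hi, hu'_def _ i _ hi, htend', htend', hpay', hpay',
        ← hu_def R i _ hi, ← hu_def _ i _ hi]
      exact hSP R hR i w' hw' hw'int
  · intro R hR i
    rcases hOD i with hi | hi
    · rw [hu'_off R i _ hi, ht', htend', hpay']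
      have h2 := split_int (R i) (hR i).2 (t R i) (tend R) (htrange R i hi).1
        (htrange R i hi).2 (htendrange R).2
      rw [h2]
      have hIRi := hIR R hR i
      rw [hu_off R i _ hi] at hIRi
      have hnn : 0 ≤ ∫ z in (0:ℝ)..(t R i), R i z :=
        intervalIntegral.integral_nonneg (htrange R i hi).1 (fun z _ => (hR i).1 z)
      linarith
    · rw [hu'_def R i _ hi, htend', hpay', ← hu_def R i _ hi]
      exact hIR R hR i
  · intro R; simp [hpay']
end
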